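/- For a, b ∈ T_n, the semigroups (T_n, *_a) and (T_n, *_b) are isomorphic if and only if a and b have the same type, i.e., for every k the number of points of N with fiber of size k under a equals that under b. -/

import Mathlib

open Finset Polynomial


/-- Left-to-right composition in the full transformation monoid `T_n`:
`(x · a)(i) = a (x i)` (apply `x` first, then `a`). -/
def Tcomp {n : ℕ} (x a : Fin n → Fin n) : Fin n → Fin n := fun i => a (x i)

/-- The deformed multiplication `x *_a y = x · a · y` on `T_n`. -/
def Tdmul {n : ℕ} (a x y : Fin n → Fin n) : Fin n → Fin n := Tcomp (Tcomp x a) y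

/-- `a` and `b` have the same type: for every `k`, the number of points whose
fiber under `a` has `k` elements equals the corresponding number for `b`. -/
def SameType {n : ℕ} (a b : Fin n → Fin n) : Prop :=
  ∀ k : ℕ,
    (Finset.univ.filter fun y : Fin n =>
      (Finset.univ.filter fun s : Fin n => a s = y).card = k).card =
    (Finset.univ.filter fun y : Fin n =>
      (Finset.univ.filter fun s : Fin n => b s = y).card = k).card


namespace DTvar

section

variable {n : ℕ}

/-- fiber cardinality -/
def fib (a : Fin n → Fin n) (y : Fin n) : ℕ := (univ.filter fun s : Fin n => a s = y).card

lemma exists_perm_fib {a b : Fin n → Fin n} (h : SameType a b) :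
    ∃ π : Equiv.Perm (Fin n), ∀ y, fib a (π y) = fib b y := by
  have e : ∀ k : ℕ, {y : Fin n // fib b y = k} ≃ {y : Fin n // fib a y = k} := by
    intro k
    apply Fintype.equivOfCardEq
    rw [Fintype.card_subtype, Fintype.card_subtype]
    exact (h k).symm
  exact ⟨Equiv.ofFiberEquiv e, fun y => Equiv.ofFiberEquiv_map e y⟩

lemma exists_perm_decomp {a b : Fin n → Fin n} (π : Equiv.Perm (Fin n))
    (h : ∀ y, fib a (π y) = fib b y) :
    ∃ ρ : Equiv.Perm (Fin n), ∀ i, a (ρ i) = π (b i) := by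
  have e : ∀ c : Fin n, {s : Fin n // b s = c} ≃ {s : Fin n // π.symm (a s) = c} := by
    intro c
    apply Fintype.equivOfCardEq
    rw [Fintype.card_subtype, Fintype.card_subtype]
    have : ∀ s : Fin n, (π.symm (a s) = c) = (a s = π c) := by
      intro s
      simp [Equiv.symm_apply_eq]
    simp only [this]
    exact (h c).symm
  refine ⟨Equiv.ofFiberEquiv e, fun i => ?_⟩
  have := Equiv.ofFiberEquiv_map e i
  have := congrArg π this
  simpa using this

theorem easy_dir {a b : Fin n → Fin n} (h : SameType a b) :
    ∃ e : (Fin n → Fin n) ≃ (Fin n → Fin n), ∀ x y : Fin n → Fin n,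
      e (Tdmul a x y) = Tdmul b (e x) (e y) := by
  obtain ⟨π, hπ⟩ := exists_perm_fib h
  obtain ⟨ρ, hρ⟩ := exists_perm_decomp π hπ
  -- b = π.symm ∘ a ∘ ρ
  have hb : ∀ i, b i = π.symm (a (ρ i)) := by
    intro i; rw [hρ i, Equiv.symm_apply_apply]
  refine ⟨Equiv.arrowCongr π.symm ρ.symm, fun x y => ?_⟩
  funext i
  simp only [Equiv.arrowCongr_apply, Tdmul, Tcomp, Function.comp_apply, Equiv.symm_symm, hb,
    Equiv.apply_symm_apply, Equiv.symm_apply_apply]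

end

section
variable {n : ℕ}

lemma image_univ_equiv {α : Type*} [Fintype α] [DecidableEq α] (e : α ≃ α) :
    Finset.image (⇑e) univ = univ := by
  ext z; simp [e.surjective z]

lemma image_comp_equiv {α β : Type*} [Fintype α] [DecidableEq α] [DecidableEq β]
    (e : α ≃ α) (f : α → β) :
    Finset.image (fun u => f (e u)) univ = Finset.image f univ := by
  conv_rhs => rw [← image_univ_equiv e]
  rw [Finset.image_image]
  rfl

/-- Limg: principal left-sided set `{u *_a x : u}` -/
def Limg (a x : Fin n → Fin n) : Finset (Fin n → Fin n) :=
  Finset.image (fun u => Tdmul a u x) univ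

/-- Jimg: two-sided set `{u *_a x *_a v : u v}` -/
def Jimg (a x : Fin n → Fin n) : Finset (Fin n → Fin n) :=
  Finset.image (fun uv : (Fin n → Fin n) × (Fin n → Fin n) => Tdmul a (Tdmul a uv.1 x) uv.2) univ

variable {a b : Fin n → Fin n} {e : (Fin n → Fin n) ≃ (Fin n → Fin n)}
  (he : ∀ x y : Fin n → Fin n, e (Tdmul a x y) = Tdmul b (e x) (e y))

include he in
lemma Limg_card_eq (x : Fin n → Fin n) : (Limg a x).card = (Limg b (e x)).card := by
  have h1 : Limg b (e x) = Finset.image (⇑e) (Limg a x) := by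
    unfold Limg
    rw [Finset.image_image]
    have : ∀ u : Fin n → Fin n, (Tdmul b · (e x)) (e u) = (⇑e ∘ fun u => Tdmul a u x) u := by
      intro u; simp [Function.comp, he]
    calc Finset.image (fun u => Tdmul b u (e x)) univ
        = Finset.image (fun u => Tdmul b (e u) (e x)) univ := (image_comp_equiv e _).symm
      _ = Finset.image (fun u => e (Tdmul a u x)) univ := by
          apply Finset.image_congr; intro u _; exact (he u x).symm
  rw [h1, Finset.card_image_of_injective _ e.injective]

include he in
lemma Jimg_card_eq (x : Fin n → Fin n) : (Jimg a x).card = (Jimg b (e x)).card := by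
  have h1 : Jimg b (e x) = Finset.image (⇑e) (Jimg a x) := by
    unfold Jimg
    rw [Finset.image_image]
    calc Finset.image (fun uv : _ × _ => Tdmul b (Tdmul b uv.1 (e x)) uv.2) univ
        = Finset.image ((fun uv : _ × _ => Tdmul b (Tdmul b uv.1 (e x)) uv.2) ∘
            ⇑(Equiv.prodCongr e e)) univ := by
          conv_lhs => rw [← image_univ_equiv (Equiv.prodCongr e e)]
          rw [Finset.image_image]
      _ = Finset.image (fun uv : _ × _ => e (Tdmul a (Tdmul a uv.1 x) uv.2)) univ := by
          apply Finset.image_congr; intro uv _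
          show Tdmul b (Tdmul b (e uv.1) (e x)) (e uv.2) = e (Tdmul a (Tdmul a uv.1 x) uv.2)
          rw [he, he]
  rw [h1, Finset.card_image_of_injective _ e.injective]

end

section
variable {n : ℕ}

open scoped Classical in
/-- partial inverse of an embedding between coerced finsets -/
noncomputable def pinv {α : Type*} {H G : Finset α} (ι : ↥H ↪ ↥G) (dflt : α → α) : α → α :=
  fun z => if h : ∃ w : ↥H, ↑(ι w) = z then ↑(Classical.choose h) else dflt z

lemma pinv_apply {α : Type*} {H G : Finset α} (ι : ↥H ↪ ↥G) (dflt : α → α) (w : ↥H) :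
    pinv ι dflt ↑(ι w) = ↑w := by
  unfold pinv
  have h : ∃ w' : ↥H, ↑(ι w') = (↑(ι w) : α) := ⟨w, rfl⟩
  rw [dif_pos h]
  have := Classical.choose_spec h
  have : ι (Classical.choose h) = ι w := Subtype.ext this
  rw [ι.injective this]

lemma Limg_eq (a x : Fin n → Fin n) :
    Finset.image (fun u => Tdmul a u x) univ =
      Fintype.piFinset (fun _ : Fin n => univ.image (fun i => x (a i))) := by
  ext h
  simp only [Finset.mem_image, Fintype.mem_piFinset]
  constructor
  · rintro ⟨u, -, rfl⟩ i
    exact ⟨u i, Finset.mem_univ _, rfl⟩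
  · intro hmem
    have : ∀ i, ∃ s, x (a s) = h i := by
      intro i
      obtain ⟨s, -, hs⟩ := hmem i
      exact ⟨s, hs⟩
    choose u hu using this
    exact ⟨u, Finset.mem_univ _, funext fun i => hu i⟩

lemma Limg_card (a x : Fin n → Fin n) :
    (Finset.image (fun u => Tdmul a u x) univ).card
      = (univ.image (fun i => x (a i))).card ^ n := by
  rw [Limg_eq, Fintype.card_piFinset]
  simp

lemma Jimg_eq (a x : Fin n → Fin n) :
    Finset.image (fun uv : (Fin n → Fin n) × (Fin n → Fin n) =>
        Tdmul a (Tdmul a uv.1 x) uv.2) univ =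
      univ.filter (fun h : Fin n → Fin n =>
        (univ.image h).card ≤ (univ.image (fun i => a (x (a i)))).card) := by
  classical
  set g : Fin n → Fin n := fun i => a (x (a i)) with hg
  have key : ∀ uv : (Fin n → Fin n) × (Fin n → Fin n),
      Tdmul a (Tdmul a uv.1 x) uv.2 = fun i => uv.2 (g (uv.1 i)) := by
    intro uv; funext i; rfl
  ext h
  simp only [Finset.mem_image, Finset.mem_filter, Finset.mem_univ, true_and]
  constructor
  · rintro ⟨uv, rfl⟩
    rw [key]
    have h1 : (univ.image fun i => uv.2 (g (uv.1 i))) = ((univ.image (fun i => g (uv.1 i))).image uv.2) := by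
      rw [Finset.image_image]; rfl
    have h2 : (univ.image (fun i => g (uv.1 i))) = ((univ.image uv.1).image g) := by
      rw [Finset.image_image]; rfl
    calc (univ.image fun i => uv.2 (g (uv.1 i))).card
        = ((univ.image (fun i => g (uv.1 i))).image uv.2).card := by rw [h1]
      _ ≤ (univ.image (fun i => g (uv.1 i))).card := Finset.card_image_le
      _ = ((univ.image uv.1).image g).card := by rw [h2]
      _ ≤ (univ.image g).card := Finset.card_le_card
            (Finset.image_subset_image (Finset.subset_univ _))
  · intro hcard
    -- build u, v with h = v ∘ g ∘ u
    set H : Finset (Fin n) := univ.image h with hH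
    set G : Finset (Fin n) := univ.image g with hGdef
    have hle : Fintype.card ↥H ≤ Fintype.card ↥G := by
      rw [Fintype.card_coe, Fintype.card_coe]; exact hcard
    obtain ⟨ι⟩ := Function.Embedding.nonempty_of_card_le hle
    have hmemH : ∀ i, h i ∈ H := fun i => Finset.mem_image.2 ⟨i, Finset.mem_univ _, rfl⟩
    have hpre : ∀ i, ∃ s, g s = ↑(ι ⟨h i, hmemH i⟩) := by
      intro i
      have : (↑(ι ⟨h i, hmemH i⟩) : Fin n) ∈ G := (ι ⟨h i, hmemH i⟩).2
      obtain ⟨s, -, hs⟩ := Finset.mem_image.1 this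
      exact ⟨s, hs⟩
    choose u hu using hpre
    refine ⟨(u, pinv ι id), ?_⟩
    rw [key]
    funext i
    show pinv ι id (g (u i)) = h i
    rw [hu i, pinv_apply]

lemma exists_fun_image_card (R : ℕ) (hR1 : 1 ≤ R) (hRn : R ≤ n) :
    ∃ h : Fin n → Fin n, (univ.image h).card = R := by
  have hn : 0 < n := lt_of_lt_of_le hR1 hRn
  refine ⟨fun i => ⟨min i.val (R - 1), lt_of_le_of_lt (min_le_left _ _) i.isLt⟩, ?_⟩
  have himg : (univ.image fun i : Fin n =>
      (⟨min i.val (R - 1), lt_of_le_of_lt (min_le_left _ _) i.isLt⟩ : Fin n))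
      = univ.filter (fun j : Fin n => j.val < R) := by
    ext j
    simp only [Finset.mem_image, Finset.mem_filter, Finset.mem_univ, true_and]
    constructor
    · rintro ⟨i, rfl⟩
      exact lt_of_le_of_lt (min_le_right _ _) (Nat.lt_of_le_pred hR1 le_rfl)
    · intro hj
      have : min j.val (R - 1) = j.val := min_eq_left (Nat.le_pred_of_lt hj)
      exact ⟨j, Fin.ext this⟩
  rw [himg]
  have : univ.filter (fun j : Fin n => j.val < R)
      = Finset.map ⟨Fin.castLE hRn, Fin.castLE_injective hRn⟩ univ := by
    ext j
    simp only [Finset.mem_filter, Finset.mem_univ, true_and, Finset.mem_map,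
      Function.Embedding.coeFn_mk]
    constructor
    · intro hj; exact ⟨⟨j.val, hj⟩, Fin.ext rfl⟩
    · rintro ⟨i, rfl⟩; exact i.isLt
  rw [this, Finset.card_map, Finset.card_univ, Fintype.card_fin]

/-- cardinality of rank-≤-R filter, strictly monotone up to n -/
lemma rank_filter_strictmono {R1 R2 : ℕ} (h12 : R1 < R2) (h2 : R2 ≤ n) :
    (univ.filter fun h : Fin n → Fin n => (univ.image h).card ≤ R1).card <
    (univ.filter fun h : Fin n → Fin n => (univ.image h).card ≤ R2).card := by
  apply Finset.card_lt_card
  rw [Finset.ssubset_iff_of_subset]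
  · obtain ⟨h, hh⟩ := exists_fun_image_card R2 (Nat.one_le_iff_ne_zero.2 (by omega)) h2
    exact ⟨h, by simp [hh], by simp [hh]; omega⟩
  · intro h hh
    simp only [Finset.mem_filter, Finset.mem_univ, true_and] at hh ⊢
    omega

lemma rank_eq_of_filter_card_eq {R1 R2 : ℕ} (h1 : R1 ≤ n) (h2 : R2 ≤ n)
    (h : (univ.filter fun h : Fin n → Fin n => (univ.image h).card ≤ R1).card =
         (univ.filter fun h : Fin n → Fin n => (univ.image h).card ≤ R2).card) :
    R1 = R2 := by
  rcases lt_trichotomy R1 R2 with hlt | heq | hgt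
  · exact absurd h (Nat.ne_of_lt (rank_filter_strictmono hlt h2))
  · exact heq
  · exact absurd h.symm (Nat.ne_of_lt (rank_filter_strictmono hgt h1))

end

section
variable {n : ℕ}

lemma subtypeCongr_apply_mem {α : Type*} {p q : α → Prop} [DecidablePred p] [DecidablePred q]
    (e : { x // p x } ≃ { x // q x }) (f : { x // ¬p x } ≃ { x // ¬q x }) (w : α) (hw : p w) :
    Equiv.subtypeCongr e f w = ↑(e ⟨w, hw⟩) := by
  simp [Equiv.subtypeCongr, hw]

lemma exists_perm_image (A B : Finset (Fin n)) (h : A.card = B.card) :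
    ∃ π : Equiv.Perm (Fin n), A.image ⇑π = B := by
  classical
  have h1 : Fintype.card {x : Fin n // x ∈ A} = Fintype.card {x : Fin n // x ∈ B} := by
    rw [Fintype.card_coe, Fintype.card_coe, h]
  have h2 : Fintype.card {x : Fin n // ¬ x ∈ A} = Fintype.card {x : Fin n // ¬ x ∈ B} := by
    rw [Fintype.card_subtype_compl, Fintype.card_subtype_compl]
    rw [Fintype.card_coe, Fintype.card_coe, h]
  set ep := Fintype.equivOfCardEq h1
  set en := Fintype.equivOfCardEq h2
  refine ⟨Equiv.subtypeCongr ep en, ?_⟩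
  ext z
  simp only [Finset.mem_image]
  constructor
  · rintro ⟨w, hw, rfl⟩
    rw [subtypeCongr_apply_mem ep en w hw]
    exact (ep ⟨w, hw⟩).2
  · intro hz
    refine ⟨↑(ep.symm ⟨z, hz⟩), (ep.symm ⟨z, hz⟩).2, ?_⟩
    rw [subtypeCongr_apply_mem ep en _ (ep.symm ⟨z, hz⟩).2]
    simp

open scoped Classical in
noncomputable def pinv' {α : Type*} {H G : Finset α} (ι : ↥H ↪ ↥G) (dflt : α → α) : α → α :=
  fun z => if h : ∃ w : ↥H, ↑(ι w) = z then ↑(Classical.choose h) else dflt z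

lemma count_image_eq (A A' S S' : Finset (Fin n)) (hA : A.card = A'.card)
    (hS : S.card = S'.card) :
    (univ.filter fun x : Fin n → Fin n => A.image x = S).card =
    (univ.filter fun x : Fin n → Fin n => A'.image x = S').card := by
  classical
  obtain ⟨π, hπ⟩ := exists_perm_image A' A hA.symm
  obtain ⟨ρ, hρ⟩ := exists_perm_image S S' hS
  apply Finset.card_equiv (Equiv.arrowCongr π.symm ρ)
  intro x
  simp only [Finset.mem_filter, Finset.mem_univ, true_and]
  have key : A'.image ((Equiv.arrowCongr π.symm ρ) x) = (A.image x).image ⇑ρ := by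
    have : (Equiv.arrowCongr π.symm ρ) x = ⇑ρ ∘ x ∘ ⇑π := by
      funext z; simp [Equiv.arrowCongr]
    rw [this, ← hπ, Finset.image_image, Finset.image_image]
    rfl
  constructor
  · intro hx; rw [key, hx, hρ]
  · intro hx
    rw [key, ← hρ] at hx
    exact Finset.image_injective ρ.injective hx

lemma count_image_pos (A S : Finset (Fin n)) (h1 : 1 ≤ S.card) (h2 : S.card ≤ A.card) :
    0 < (univ.filter fun x : Fin n → Fin n => A.image x = S).card := by
  classical
  rw [Finset.card_pos]
  have hle : Fintype.card ↥S ≤ Fintype.card ↥A := by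
    rw [Fintype.card_coe, Fintype.card_coe]; exact h2
  obtain ⟨ι⟩ := Function.Embedding.nonempty_of_card_le hle
  have hSne : S.Nonempty := Finset.card_pos.1 h1
  obtain ⟨s₀, hs₀⟩ := hSne
  refine ⟨pinv' ι (fun _ => s₀), ?_⟩
  simp only [Finset.mem_filter, Finset.mem_univ, true_and]
  ext z
  simp only [Finset.mem_image]
  constructor
  · rintro ⟨w, hw, rfl⟩
    unfold pinv'
    split
    · next hex => exact (Classical.choose hex).2
    · exact hs₀
  · intro hz
    refine ⟨↑(ι ⟨z, hz⟩), (ι ⟨z, hz⟩).2, ?_⟩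
    unfold pinv'
    have hex : ∃ w : ↥S, ↑(ι w) = (↑(ι ⟨z, hz⟩) : Fin n) := ⟨⟨z, hz⟩, rfl⟩
    rw [dif_pos hex]
    have h3 := Classical.choose_spec hex
    have h4 : ι (Classical.choose hex) = ι ⟨z, hz⟩ := Subtype.ext h3
    have := ι.injective h4
    rw [this]

end

section
variable {n : ℕ}

lemma filter_decomp (a : Fin n → Fin n) (m k : ℕ) :
    (univ.filter fun x : Fin n → Fin n =>
        ((univ.image a).image x).card = m ∧ (((univ.image a).image x).image a).card = k).card
      = ∑ S ∈ (univ.filter fun S : Finset (Fin n) => S.card = m ∧ (S.image a).card = k),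
          (univ.filter fun x : Fin n → Fin n => (univ.image a).image x = S).card := by
  classical
  rw [Finset.card_eq_sum_card_fiberwise
    (f := fun x : Fin n → Fin n => (univ.image a).image x)
    (t := univ.filter fun S : Finset (Fin n) => S.card = m ∧ (S.image a).card = k)
    (by intro x hx
        simp only [Finset.mem_coe, Finset.mem_filter, Finset.mem_univ, true_and] at hx ⊢
        exact hx)]
  apply Finset.sum_congr rfl
  intro S hS
  simp only [Finset.mem_filter, Finset.mem_univ, true_and] at hS
  congr 1
  ext x
  simp only [Finset.mem_filter, Finset.mem_univ, true_and]
  constructor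
  · rintro ⟨-, h2⟩; exact h2
  · intro h; refine ⟨?_, h⟩; rw [h]; exact hS

lemma S_m1_card (a : Fin n → Fin n) (m : ℕ) (hm : 1 ≤ m) :
    (univ.filter fun S : Finset (Fin n) => S.card = m ∧ (S.image a).card = 1).card
      = ∑ y : Fin n, ((univ.filter fun s : Fin n => a s = y).card).choose m := by
  classical
  have heq : (univ.filter fun S : Finset (Fin n) => S.card = m ∧ (S.image a).card = 1)
      = univ.biUnion (fun y : Fin n => (univ.filter fun s : Fin n => a s = y).powersetCard m) := by
    ext S
    simp only [Finset.mem_filter, Finset.mem_univ, true_and, Finset.mem_biUnion,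
      Finset.mem_powersetCard]
    constructor
    · rintro ⟨hcard, himg⟩
      obtain ⟨y, hy⟩ := Finset.card_eq_one.1 himg
      refine ⟨y, ?_, hcard⟩
      intro s hs
      simp only [Finset.mem_filter, Finset.mem_univ, true_and]
      have : a s ∈ S.image a := Finset.mem_image_of_mem a hs
      rw [hy] at this
      exact Finset.mem_singleton.1 this
    · rintro ⟨y, hsub, hcard⟩
      refine ⟨hcard, ?_⟩
      have hne : S.Nonempty := Finset.card_pos.1 (lt_of_lt_of_le hm (le_of_eq hcard.symm))
      rw [Finset.card_eq_one]
      refine ⟨y, ?_⟩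
      ext z
      simp only [Finset.mem_image, Finset.mem_singleton]
      constructor
      · rintro ⟨s, hs, rfl⟩
        have := hsub hs
        simp only [Finset.mem_filter] at this
        exact this.2
      · rintro rfl
        obtain ⟨s, hs⟩ := hne
        have := hsub hs
        simp only [Finset.mem_filter] at this
        exact ⟨s, hs, this.2⟩
  rw [heq, Finset.card_biUnion]
  · apply Finset.sum_congr rfl
    intro y _
    exact Finset.card_powersetCard _ _
  · intro y _ y' _ hyy'
    rw [Function.onFun, Finset.disjoint_left]
    intro S hS hS'
    simp only [Finset.mem_powersetCard] at hS hS'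
    have hne : S.Nonempty := by
      rw [← Finset.card_pos, hS.2]; omega
    obtain ⟨s, hs⟩ := hne
    have h1 := hS.1 hs; have h2 := hS'.1 hs
    simp only [Finset.mem_filter] at h1 h2
    exact hyy' (h1.2 ▸ h2.2)

end

section

lemma univ_val_map_get {α : Type*} (l : List α) :
    (Finset.univ.val.map l.get : Multiset α) = ↑l := by
  rw [Fin.univ_def]
  show (Multiset.map l.get ↑(List.finRange l.length)) = (l : Multiset α)
  rw [Multiset.map_coe, ← List.ofFn_eq_map, List.ofFn_get]

/-- Newton's identity for multisets over ℚ -/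
lemma newton_multiset (P : Multiset ℚ) (k : ℕ) :
    (k : ℚ) * P.esymm k = (-1 : ℚ) ^ (k + 1) *
      ∑ p ∈ (Finset.HasAntidiagonal.antidiagonal k).filter (fun p => p.1 < k),
        (-1 : ℚ) ^ p.1 * P.esymm p.1 * (P.map (· ^ p.2)).sum := by
  classical
  obtain ⟨l, rfl⟩ : ∃ l : List ℚ, (↑l : Multiset ℚ) = P := ⟨P.toList, Multiset.coe_toList P⟩
  have key := congrArg (MvPolynomial.aeval l.get)
    (MvPolynomial.mul_esymm_eq_sum (Fin l.length) ℚ k)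
  have haev_esymm : ∀ i : ℕ, MvPolynomial.aeval l.get (MvPolynomial.esymm (Fin l.length) ℚ i)
      = Multiset.esymm (↑l) i := by
    intro i
    rw [MvPolynomial.aeval_esymm_eq_multiset_esymm, univ_val_map_get]
  have haev_psum : ∀ j : ℕ, MvPolynomial.aeval l.get (MvPolynomial.psum (Fin l.length) ℚ j)
      = ((↑l : Multiset ℚ).map (· ^ j)).sum := by
    intro j
    rw [MvPolynomial.psum, map_sum]
    simp only [map_pow, MvPolynomial.aeval_X]
    rw [← univ_val_map_get l, Multiset.map_map]
    rfl
  rw [map_mul, map_natCast, haev_esymm, map_mul, map_pow, map_neg, map_one, map_sum] at key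
  simp only [map_mul, map_pow, map_neg, map_one, haev_esymm, haev_psum] at key
  exact key

lemma esymm_eq_of_psum_eq (P Q : Multiset ℚ) (r : ℕ) (hP : Multiset.card P = r)
    (hQ : Multiset.card Q = r)
    (hpsum : ∀ m, 1 ≤ m → m ≤ r → (P.map (· ^ m)).sum = (Q.map (· ^ m)).sum) :
    ∀ k, k ≤ r → P.esymm k = Q.esymm k := by
  intro k
  induction k using Nat.strong_induction_on with
  | _ k ih =>
    intro hk
    rcases Nat.eq_zero_or_pos k with rfl | hkpos
    · simp [Multiset.esymm]
    · have hnewP := newton_multiset P k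
      have hnewQ := newton_multiset Q k
      have hkne : (k : ℚ) ≠ 0 := Nat.cast_ne_zero.2 (Nat.pos_iff_ne_zero.1 hkpos)
      have hsum_eq : ∑ p ∈ (Finset.HasAntidiagonal.antidiagonal k).filter (fun p => p.1 < k),
            (-1 : ℚ) ^ p.1 * P.esymm p.1 * (P.map (· ^ p.2)).sum
          = ∑ p ∈ (Finset.HasAntidiagonal.antidiagonal k).filter (fun p => p.1 < k),
            (-1 : ℚ) ^ p.1 * Q.esymm p.1 * (Q.map (· ^ p.2)).sum := by
        apply Finset.sum_congr rfl
        intro p hp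
        simp only [Finset.mem_filter, Finset.HasAntidiagonal.mem_antidiagonal] at hp
        have h1 : P.esymm p.1 = Q.esymm p.1 := ih p.1 hp.2 (le_trans (le_of_lt hp.2) hk)
        have h2 : (P.map (· ^ p.2)).sum = (Q.map (· ^ p.2)).sum := by
          apply hpsum p.2 (by omega) (by omega)
        rw [h1, h2]
      have : (k : ℚ) * P.esymm k = (k : ℚ) * Q.esymm k := by
        rw [hnewP, hnewQ, hsum_eq]
      exact mul_left_cancel₀ hkne this

lemma multiset_rat_eq_of_psum_eq (P Q : Multiset ℚ) (r : ℕ) (hP : Multiset.card P = r)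
    (hQ : Multiset.card Q = r)
    (hpsum : ∀ m, 1 ≤ m → m ≤ r → (P.map (· ^ m)).sum = (Q.map (· ^ m)).sum) :
    P = Q := by
  have hesymm := esymm_eq_of_psum_eq P Q r hP hQ hpsum
  have hprod : (P.map fun t => (X : ℚ[X]) - C t).prod = (Q.map fun t => (X : ℚ[X]) - C t).prod := by
    apply Polynomial.ext
    intro k
    rcases le_or_gt k r with hk | hk
    · rw [Multiset.prod_X_sub_C_coeff P (by rw [hP]; exact hk),
        Multiset.prod_X_sub_C_coeff Q (by rw [hQ]; exact hk), hP, hQ,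
        hesymm (r - k) (Nat.sub_le _ _)]
    · have hdP : ((P.map fun t => (X : ℚ[X]) - C t).prod).natDegree = r := by
        rw [Polynomial.natDegree_multiset_prod_X_sub_C_eq_card, hP]
      have hdQ : ((Q.map fun t => (X : ℚ[X]) - C t).prod).natDegree = r := by
        rw [Polynomial.natDegree_multiset_prod_X_sub_C_eq_card, hQ]
      rw [Polynomial.coeff_eq_zero_of_natDegree_lt (by omega),
        Polynomial.coeff_eq_zero_of_natDegree_lt (by omega)]
  have := congrArg Polynomial.roots hprod
  rwa [Polynomial.roots_multiset_prod_X_sub_C, Polynomial.roots_multiset_prod_X_sub_C] at this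

end

section

lemma sum_poly_eval (P Q : Multiset ℕ) (r : ℕ) (hP : Multiset.card P = r)
    (hQ : Multiset.card Q = r)
    (hmom : ∀ m, 1 ≤ m → m ≤ r →
      (P.map fun j => j.choose m).sum = (Q.map fun j => j.choose m).sum) :
    ∀ d, d ≤ r → ∀ f : ℚ[X], f.natDegree ≤ d →
      (P.map fun j : ℕ => f.eval (j : ℚ)).sum = (Q.map fun j : ℕ => f.eval (j : ℚ)).sum := by
  intro d
  induction d with
  | zero =>
    intro _ f hf
    rw [Polynomial.eq_C_of_natDegree_le_zero hf]
    simp only [Polynomial.eval_C]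
    rw [Multiset.map_const', Multiset.map_const', Multiset.sum_replicate, Multiset.sum_replicate,
      hP, hQ]
  | succ d ihd =>
    intro hdr f hf
    rcases le_or_gt f.natDegree d with hfd | hfd
    · exact ihd (by omega) f hfd
    -- natDegree f = d + 1
    set c := f.coeff (d + 1) with hc
    set dp : ℚ[X] := descPochhammer ℚ (d + 1) with hdp
    have hdpdeg : dp.natDegree = d + 1 := descPochhammer_natDegree (R := ℚ) (d + 1)
    have hdpmonic : dp.Monic := monic_descPochhammer ℚ (d + 1)
    set g : ℚ[X] := f - C c * dp with hg
    have hgd : g.natDegree ≤ d + 1 := by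
      apply le_trans (Polynomial.natDegree_sub_le _ _)
      apply max_le hf
      exact le_trans (Polynomial.natDegree_C_mul_le _ _) (le_of_eq hdpdeg)
    have hgcoeff : g.coeff (d + 1) = 0 := by
      rw [hg, Polynomial.coeff_sub, Polynomial.coeff_C_mul]
      have : dp.coeff (d + 1) = 1 := by
        have := hdpmonic.coeff_natDegree
        rwa [hdpdeg] at this
      rw [this, mul_one, sub_self]
    have hgdeg : g.natDegree ≤ d := by
      rcases eq_or_ne g 0 with hg0 | hg0
      · rw [hg0]; simp
      · rcases Nat.lt_or_ge g.natDegree (d + 1) with h | h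
        · omega
        · exfalso
          have heq : g.natDegree = d + 1 := le_antisymm hgd h
          have := Polynomial.leadingCoeff_ne_zero.2 hg0
          rw [Polynomial.leadingCoeff, heq, hgcoeff] at this
          exact this rfl
    have hf_eq : f = g + C c * dp := by rw [hg]; ring
    have hdpsum : (P.map fun j : ℕ => dp.eval (j : ℚ)).sum = (Q.map fun j : ℕ => dp.eval (j : ℚ)).sum := by
      have hev : ∀ j : ℕ, dp.eval (j : ℚ) = ((Nat.factorial (d + 1) : ℕ) : ℚ) * (j.choose (d + 1) : ℚ) := by
        intro j
        rw [hdp, descPochhammer_eval_eq_descFactorial,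
          Nat.descFactorial_eq_factorial_mul_choose]
        push_cast
        ring
      simp only [hev]
      rw [Multiset.sum_map_mul_left, Multiset.sum_map_mul_left]
      congr 1
      have hcastP : (P.map fun j : ℕ => ((j.choose (d + 1) : ℕ) : ℚ)).sum
          = (((P.map fun j : ℕ => j.choose (d + 1)).sum : ℕ) : ℚ) := by
        rw [Nat.cast_multiset_sum, Multiset.map_map]
        rfl
      have hcastQ : (Q.map fun j : ℕ => ((j.choose (d + 1) : ℕ) : ℚ)).sum
          = (((Q.map fun j : ℕ => j.choose (d + 1)).sum : ℕ) : ℚ) := by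
        rw [Nat.cast_multiset_sum, Multiset.map_map]
        rfl
      rw [hcastP, hcastQ, hmom (d + 1) (by omega) hdr]
    calc (P.map fun j : ℕ => f.eval (j : ℚ)).sum
        = (P.map fun j : ℕ => g.eval (j : ℚ)).sum + c * (P.map fun j : ℕ => dp.eval (j : ℚ)).sum := by
          rw [← Multiset.sum_map_mul_left, ← Multiset.sum_map_add]
          apply congrArg
          apply Multiset.map_congr rfl
          intro j _
          conv_lhs => rw [hf_eq]
          simp [Polynomial.eval_add, Polynomial.eval_mul]
      _ = (Q.map fun j : ℕ => g.eval (j : ℚ)).sum + c * (Q.map fun j : ℕ => dp.eval (j : ℚ)).sum := by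
          rw [ihd (by omega) g hgdeg, hdpsum]
      _ = (Q.map fun j : ℕ => f.eval (j : ℚ)).sum := by
          rw [← Multiset.sum_map_mul_left, ← Multiset.sum_map_add]
          apply congrArg
          apply Multiset.map_congr rfl
          intro j _
          conv_rhs => rw [hf_eq]
          simp [Polynomial.eval_add, Polynomial.eval_mul]

/-- main arithmetic lemma: equal binomial moments up to the cardinality force equality -/
lemma multiset_nat_eq_of_choose_moments (P Q : Multiset ℕ) (r : ℕ)
    (hP : Multiset.card P = r) (hQ : Multiset.card Q = r)
    (hmom : ∀ m, 1 ≤ m → m ≤ r →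
      (P.map fun j => j.choose m).sum = (Q.map fun j => j.choose m).sum) :
    P = Q := by
  set P' : Multiset ℚ := P.map (fun j : ℕ => (j : ℚ)) with hP'
  set Q' : Multiset ℚ := Q.map (fun j : ℕ => (j : ℚ)) with hQ'
  have hPQ : P' = Q' := by
    apply multiset_rat_eq_of_psum_eq P' Q' r (by rw [hP', Multiset.card_map, hP])
      (by rw [hQ', Multiset.card_map, hQ])
    intro m hm1 hmr
    have hXdeg : ((X : ℚ[X]) ^ m).natDegree = m := Polynomial.natDegree_X_pow m
    have := sum_poly_eval P Q r hP hQ hmom m hmr ((X : ℚ[X]) ^ m) (le_of_eq hXdeg)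
    simp only [Polynomial.eval_pow, Polynomial.eval_X] at this
    rw [hP', hQ', Multiset.map_map, Multiset.map_map]
    exact this
  exact Multiset.map_injective Nat.cast_injective hPQ

end

variable {n : ℕ}

lemma br1 (a x : Fin n → Fin n) :
    (univ.image a).image x = univ.image (fun i => x (a i)) := by
  rw [Finset.image_image]; rfl

lemma br2 (a x : Fin n → Fin n) :
    ((univ.image a).image x).image a = univ.image (fun i => a (x (a i))) := by
  rw [br1, Finset.image_image]; rfl

section assembly
variable {a b : Fin n → Fin n} {e : (Fin n → Fin n) ≃ (Fin n → Fin n)}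
variable (he : ∀ x y : Fin n → Fin n, e (Tdmul a x y) = Tdmul b (e x) (e y))

include he

lemma beta_eq (hn : n ≠ 0) (x : Fin n → Fin n) :
    ((univ.image a).image x).card = ((univ.image b).image (e x)).card := by
  have h3 : (Limg a x).card = (Limg b (e x)).card := Limg_card_eq he x
  unfold Limg at h3
  rw [Limg_card, Limg_card] at h3
  rw [br1, br1]
  exact Nat.pow_left_injective hn h3

lemma gamma_eq (x : Fin n → Fin n) :
    (((univ.image a).image x).image a).card = (((univ.image b).image (e x)).image b).card := by
  have h3 : (Jimg a x).card = (Jimg b (e x)).card := Jimg_card_eq he x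
  unfold Jimg at h3
  rw [Jimg_eq, Jimg_eq] at h3
  have hbound1 : (univ.image (fun i => a (x (a i)))).card ≤ n := by
    calc (univ.image (fun i => a (x (a i)))).card ≤ (univ : Finset (Fin n)).card :=
          Finset.card_image_le
      _ = n := by simp
  have hbound2 : (univ.image (fun i => b (e x (b i)))).card ≤ n := by
    calc (univ.image (fun i => b (e x (b i)))).card ≤ (univ : Finset (Fin n)).card :=
          Finset.card_image_le
      _ = n := by simp
  have := rank_eq_of_filter_card_eq hbound1 hbound2 h3
  rw [br2, br2]
  exact this

lemma rank_a_eq_rank_b (hn : n ≠ 0) : (univ.image a).card = (univ.image b).card := by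
  have he' : ∀ x y, e.symm (Tdmul b x y) = Tdmul a (e.symm x) (e.symm y) := by
    intro x y
    apply e.injective
    rw [Equiv.apply_symm_apply, he, Equiv.apply_symm_apply, Equiv.apply_symm_apply]
  have h1 := beta_eq he hn id
  rw [Finset.image_id] at h1
  have h2 : ((univ.image b).image (e id)).card ≤ (univ.image b).card := Finset.card_image_le
  have h1' := beta_eq he' hn id
  rw [Finset.image_id] at h1'
  have h2' : ((univ.image a).image (e.symm id)).card ≤ (univ.image a).card :=
    Finset.card_image_le
  omega

lemma Smk_card_eq (hn : n ≠ 0) (m k : ℕ) (hm1 : 1 ≤ m) (hmr : m ≤ (univ.image a).card) :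
    (univ.filter fun S : Finset (Fin n) => S.card = m ∧ (S.image a).card = k).card =
    (univ.filter fun S : Finset (Fin n) => S.card = m ∧ (S.image b).card = k).card := by
  classical
  have hr := rank_a_eq_rank_b he hn
  have hmn : m ≤ n := le_trans hmr (by
    calc (univ.image a).card ≤ (univ : Finset (Fin n)).card := Finset.card_image_le
      _ = n := by simp)
  obtain ⟨S₀, -, hS₀card⟩ := Finset.exists_subset_card_eq
    (s := (univ : Finset (Fin n))) (n := m) (by simpa using hmn)
  -- transfer of the x-counts
  have hC : (univ.filter fun x : Fin n → Fin n =>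
        ((univ.image a).image x).card = m ∧ (((univ.image a).image x).image a).card = k).card =
      (univ.filter fun x : Fin n → Fin n =>
        ((univ.image b).image x).card = m ∧ (((univ.image b).image x).image b).card = k).card := by
    apply Finset.card_equiv e
    intro x
    simp only [Finset.mem_filter, Finset.mem_univ, true_and]
    rw [beta_eq he hn x, gamma_eq he x]
  rw [filter_decomp a m k, filter_decomp b m k] at hC
  have hsumA : ∑ S ∈ (univ.filter fun S : Finset (Fin n) => S.card = m ∧ (S.image a).card = k),
        (univ.filter fun x : Fin n → Fin n => (univ.image a).image x = S).card
      = (univ.filter fun S : Finset (Fin n) => S.card = m ∧ (S.image a).card = k).card *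
        (univ.filter fun x : Fin n → Fin n => (univ.image a).image x = S₀).card := by
    rw [Finset.sum_congr rfl (fun S hS => ?_), Finset.sum_const, smul_eq_mul]
    simp only [Finset.mem_filter] at hS
    exact count_image_eq _ _ _ _ rfl (hS.2.1.trans hS₀card.symm)
  have hsumB : ∑ S ∈ (univ.filter fun S : Finset (Fin n) => S.card = m ∧ (S.image b).card = k),
        (univ.filter fun x : Fin n → Fin n => (univ.image b).image x = S).card
      = (univ.filter fun S : Finset (Fin n) => S.card = m ∧ (S.image b).card = k).card *
        (univ.filter fun x : Fin n → Fin n => (univ.image b).image x = S₀).card := by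
    rw [Finset.sum_congr rfl (fun S hS => ?_), Finset.sum_const, smul_eq_mul]
    simp only [Finset.mem_filter] at hS
    exact count_image_eq _ _ _ _ rfl (hS.2.1.trans hS₀card.symm)
  have hw : (univ.filter fun x : Fin n → Fin n => (univ.image b).image x = S₀).card
      = (univ.filter fun x : Fin n → Fin n => (univ.image a).image x = S₀).card :=
    count_image_eq _ _ _ _ hr.symm rfl
  have hwpos : 0 < (univ.filter fun x : Fin n → Fin n => (univ.image a).image x = S₀).card :=
    count_image_pos _ _ (by omega) (by omega)
  rw [hsumA, hsumB, hw] at hC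
  exact Nat.eq_of_mul_eq_mul_right hwpos hC

lemma moments_eq (hn : n ≠ 0) (m : ℕ) (hm1 : 1 ≤ m) (hmr : m ≤ (univ.image a).card) :
    ∑ y : Fin n, ((univ.filter fun s : Fin n => a s = y).card).choose m =
    ∑ y : Fin n, ((univ.filter fun s : Fin n => b s = y).card).choose m := by
  rw [← S_m1_card a m hm1, ← S_m1_card b m hm1]
  exact Smk_card_eq he hn m 1 hm1 hmr

lemma hard_dir : SameType a b := by
  classical
  rcases Nat.eq_zero_or_pos n with hn0 | hnpos
  · intro k
    subst hn0
    simp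
  have hn : n ≠ 0 := Nat.pos_iff_ne_zero.1 hnpos
  set r : ℕ := (univ.image a).card with hrdef
  have hr : (univ.image b).card = r := (rank_a_eq_rank_b he hn).symm
  set F : Multiset ℕ := univ.val.map (fib a) with hF
  set G : Multiset ℕ := univ.val.map (fib b) with hG
  -- cardinalities of positive parts
  have hposfilter : ∀ c : Fin n → Fin n,
      (univ.filter fun y : Fin n => 0 < fib c y) = univ.image c := by
    intro c
    ext y
    simp [fib, Finset.card_pos, Finset.filter_nonempty_iff]
  have hposcard : ∀ c : Fin n → Fin n,
      Multiset.card ((univ.val.map (fib c)).filter fun j => 0 < j) = (univ.image c).card := by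
    intro c
    rw [← Multiset.countP_eq_card_filter, Multiset.countP_map]
    rw [← hposfilter c]
    rfl
  -- moments on positive parts
  have hmompos : ∀ m, 1 ≤ m → m ≤ r →
      (((F.filter fun j => 0 < j).map fun j => j.choose m).sum =
       ((G.filter fun j => 0 < j).map fun j => j.choose m).sum) := by
    intro m hm1 hmr
    have hsplit : ∀ c : Fin n → Fin n,
        (((univ.val.map (fib c)).filter fun j => 0 < j).map (fun j => j.choose m)).sum
          = ∑ y : Fin n, (fib c y).choose m := by
      intro c
      have h1 : ((univ.val.map (fib c)).map fun j => j.choose m).sum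
          = ∑ y : Fin n, (fib c y).choose m := by
        rw [Multiset.map_map]
        rfl
      conv_rhs => rw [← h1]
      conv_rhs => rw [← Multiset.filter_add_not (fun j => 0 < j) (univ.val.map (fib c))]
      rw [Multiset.map_add, Multiset.sum_add]
      have hz : (((univ.val.map (fib c)).filter fun j => ¬ 0 < j).map
          fun j => j.choose m).sum = 0 := by
        apply Multiset.sum_eq_zero
        intro x hx
        obtain ⟨j, hj, rfl⟩ := Multiset.mem_map.1 hx
        have hj0 : j = 0 := by have := Multiset.of_mem_filter hj; omega
        rw [hj0]
        exact Nat.choose_eq_zero_of_lt hm1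
      rw [hz, add_zero]
    rw [hF, hG, hsplit a, hsplit b]
    exact moments_eq he hn m hm1 hmr
  -- conclude equality of positive parts
  have hpos_eq : (F.filter fun j => 0 < j) = (G.filter fun j => 0 < j) := by
    apply multiset_nat_eq_of_choose_moments _ _ r
    · rw [hF, hposcard a]
    · rw [hG, hposcard b, hr]
    · exact hmompos
  -- conclude F = G
  have hFG : F = G := by
    have hcardF : Multiset.card F = n := by rw [hF]; simp
    have hcardG : Multiset.card G = n := by rw [hG]; simp
    conv_lhs => rw [← Multiset.filter_add_not (fun j => 0 < j) F]
    conv_rhs => rw [← Multiset.filter_add_not (fun j => 0 < j) G]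
    rw [hpos_eq]
    congr 1
    have hcards : Multiset.card (F.filter fun j => ¬ 0 < j) =
        Multiset.card (G.filter fun j => ¬ 0 < j) := by
      have h1 := congrArg Multiset.card (Multiset.filter_add_not (fun j => 0 < j) F)
      have h2 := congrArg Multiset.card (Multiset.filter_add_not (fun j => 0 < j) G)
      rw [Multiset.card_add] at h1 h2
      have h3 := congrArg Multiset.card hpos_eq
      omega
    have hzF : ∀ j ∈ (F.filter fun j => ¬ 0 < j), j = 0 := by
      intro j hj; have := Multiset.of_mem_filter hj; omega
    have hzG : ∀ j ∈ (G.filter fun j => ¬ 0 < j), j = 0 := by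
      intro j hj; have := Multiset.of_mem_filter hj; omega
    rw [Multiset.eq_replicate_card.2 hzF, Multiset.eq_replicate_card.2 hzG, hcards]
  -- conclude SameType
  intro k
  show (univ.filter fun y : Fin n => fib a y = k).card =
    (univ.filter fun y : Fin n => fib b y = k).card
  have hcount : F.countP (fun j => j = k) = G.countP (fun j => j = k) := by rw [hFG]
  rw [hF, hG, Multiset.countP_map, Multiset.countP_map] at hcount
  calc (univ.filter fun y : Fin n => fib a y = k).card
      = Multiset.card (Multiset.filter (fun y => fib a y = k) univ.val) := by
        rw [← Finset.filter_val]; rfl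
    _ = Multiset.card (Multiset.filter (fun y => fib b y = k) univ.val) := hcount
    _ = (univ.filter fun y : Fin n => fib b y = k).card := by
        rw [← Finset.filter_val]; rfl

end assembly

end DTvar

/-- `(T_n, *_a)` and `(T_n, *_b)` are isomorphic semigroups iff `a` and `b`
have the same type. -/
theorem deformed_T_iso_iff_sameType (n : ℕ) (a b : Fin n → Fin n) :
    (∃ e : (Fin n → Fin n) ≃ (Fin n → Fin n), ∀ x y : Fin n → Fin n,
        e (Tdmul a x y) = Tdmul b (e x) (e y)) ↔ SameType a b := by
  constructor
  · rintro ⟨e, he⟩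
    exact DTvar.hard_dir he
  · exact DTvar.easy_dir
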